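/- The element w = 1 + (a-1)bâ is a unit of 𝕂G satisfying w^m = 1 + m·(a-1)bâ for every integer m. Moreover (a-1)bâ ≠ 0, so w ≠ 1; consequently, if 𝕂 has characteristic zero then w has infinite order in U(𝕂G). -/

import Mathlib

theorem stmt_16 {𝕂 : Type*} [CommRing 𝕂] [IsDomain 𝕂]
    {G : Type*} [Group G] (a b : G) (n : ℕ) (hn : 2 ≤ n) (ha : orderOf a = n)
    (hA : ¬ (Subgroup.zpowers a).Normal)
    (hb : b ∉ Subgroup.normalizer (Subgroup.zpowers a))
    (ahat : MonoidAlgebra 𝕂 G)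
    (hahat : ahat = ∑ i ∈ Finset.range n, (MonoidAlgebra.of 𝕂 G a) ^ i) :
    (1 + (MonoidAlgebra.of 𝕂 G a - 1) * MonoidAlgebra.of 𝕂 G b * ahat) * (1 - (MonoidAlgebra.of 𝕂 G a - 1) * MonoidAlgebra.of 𝕂 G b * ahat) = 1 ∧
    (1 - (MonoidAlgebra.of 𝕂 G a - 1) * MonoidAlgebra.of 𝕂 G b * ahat) * (1 + (MonoidAlgebra.of 𝕂 G a - 1) * MonoidAlgebra.of 𝕂 G b * ahat) = 1 ∧
    (∀ w : (MonoidAlgebra 𝕂 G)ˣ, (w : MonoidAlgebra 𝕂 G) = 1 + (MonoidAlgebra.of 𝕂 G a - 1) * MonoidAlgebra.of 𝕂 G b * ahat →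
      ∀ m : ℤ, ((w ^ m : (MonoidAlgebra 𝕂 G)ˣ) : MonoidAlgebra 𝕂 G) = 1 + m • ((MonoidAlgebra.of 𝕂 G a - 1) * MonoidAlgebra.of 𝕂 G b * ahat)) ∧
    (MonoidAlgebra.of 𝕂 G a - 1) * MonoidAlgebra.of 𝕂 G b * ahat ≠ 0 ∧
    (1 + (MonoidAlgebra.of 𝕂 G a - 1) * MonoidAlgebra.of 𝕂 G b * ahat ≠ 1) ∧
    (CharZero 𝕂 →
      ∀ w : (MonoidAlgebra 𝕂 G)ˣ, (w : MonoidAlgebra 𝕂 G) = 1 + (MonoidAlgebra.of 𝕂 G a - 1) * MonoidAlgebra.of 𝕂 G b * ahat → ¬ IsOfFinOrder w) := by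
  classical
  set X : MonoidAlgebra 𝕂 G := (MonoidAlgebra.of 𝕂 G a - 1) * MonoidAlgebra.of 𝕂 G b * ahat with hX
  -- the geometric-sum identity
  have hgeom : ahat * (MonoidAlgebra.of 𝕂 G a - 1) = 0 := by
    rw [hahat, geom_sum_mul, ← map_pow, ← ha, pow_orderOf_eq_one, map_one, sub_self]
  -- X is square-zero
  have hSA : ∀ t : MonoidAlgebra 𝕂 G, ahat * ((MonoidAlgebra.of 𝕂 G a - 1) * t) = 0 := by
    intro t; rw [← mul_assoc, hgeom, zero_mul]
  have hx2 : X * X = 0 := by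
    rw [hX]
    simp only [mul_assoc, hSA, mul_zero]
  -- the two unit equations
  have he1 : (1 + X) * (1 - X) = 1 := by
    have : (1 + X) * (1 - X) = 1 - X * X := by
      rw [add_mul, one_mul, mul_sub, mul_one]; abel
    rw [this, hx2, sub_zero]
  have he2 : (1 - X) * (1 + X) = 1 := by
    have : (1 - X) * (1 + X) = 1 - X * X := by
      rw [sub_mul, one_mul, mul_add, mul_one]; abel
    rw [this, hx2, sub_zero]
  -- natural powers
  have hpow : ∀ w : (MonoidAlgebra 𝕂 G)ˣ, (w : MonoidAlgebra 𝕂 G) = 1 + X →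
      ∀ k : ℕ, ((w ^ k : (MonoidAlgebra 𝕂 G)ˣ) : MonoidAlgebra 𝕂 G) = 1 + k • X := by
    intro w hw k
    induction k with
    | zero => simp
    | succ k ih =>
      rw [pow_succ, Units.val_mul, ih, hw]
      have hXX : (k • X) * X = 0 := by rw [smul_mul_assoc, hx2, smul_zero]
      calc (1 + k • X) * (1 + X) = 1 + X + k • X + (k • X) * X := by
            rw [add_mul, one_mul, mul_add, mul_one]; abel
      _ = 1 + X + k • X := by rw [hXX, add_zero]
      _ = 1 + (k + 1) • X := by rw [succ_nsmul]; abel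
  -- integer powers
  have hzpow : ∀ w : (MonoidAlgebra 𝕂 G)ˣ, (w : MonoidAlgebra 𝕂 G) = 1 + X →
      ∀ m : ℤ, ((w ^ m : (MonoidAlgebra 𝕂 G)ˣ) : MonoidAlgebra 𝕂 G) = 1 + m • X := by
    intro w hw m
    cases m with
    | ofNat k =>
      rw [Int.ofNat_eq_coe, zpow_natCast, hpow w hw k, natCast_zsmul]
    | negSucc k =>
      rw [zpow_negSucc, negSucc_zsmul]
      have hu : ((w ^ (k + 1) : (MonoidAlgebra 𝕂 G)ˣ) : MonoidAlgebra 𝕂 G) = 1 + (k + 1) • X :=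
        hpow w hw (k + 1)
      have hmul : ((w ^ (k + 1) : (MonoidAlgebra 𝕂 G)ˣ) : MonoidAlgebra 𝕂 G) *
          (1 - (k + 1) • X) = 1 := by
        rw [hu]
        have hXX : ((k + 1) • X) * ((k + 1) • X) = 0 := by
          rw [smul_mul_assoc, mul_smul_comm, hx2, smul_zero, smul_zero]
        calc (1 + (k + 1) • X) * (1 - (k + 1) • X)
            = 1 - ((k + 1) • X) * ((k + 1) • X) := by
              rw [add_mul, one_mul, mul_sub, mul_one]; abel
        _ = 1 := by rw [hXX, sub_zero]
      calc (((w ^ (k + 1))⁻¹ : (MonoidAlgebra 𝕂 G)ˣ) : MonoidAlgebra 𝕂 G)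
          = ↑(w ^ (k + 1))⁻¹ * (↑(w ^ (k + 1)) * (1 - (k + 1) • X)) := by rw [hmul, mul_one]
      _ = 1 - (k + 1) • X := by rw [← mul_assoc, Units.inv_mul, one_mul]
      _ = 1 + -((k + 1) • X) := by rw [sub_eq_add_neg]
  -- nonvanishing of X
  have hXne : X ≠ 0 := by
    intro hzero
    apply hb
    -- extract an index i with b * a ^ i = a * b
    have hxsum : X = ∑ i ∈ Finset.range n,
        ((MonoidAlgebra.single (a * (b * a ^ i)) (1 : 𝕂)) -
          MonoidAlgebra.single (b * a ^ i) 1) := by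
      rw [hX, hahat, Finset.mul_sum]
      refine Finset.sum_congr rfl fun i _ => ?_
      rw [← map_pow, sub_mul, sub_mul, one_mul, ← map_mul, ← map_mul, ← map_mul]
      simp [MonoidAlgebra.of_apply, mul_assoc]
    rw [hxsum] at hzero
    have hz : (∑ i ∈ Finset.range n,
        (Finsupp.single (a * (b * a ^ i)) (1 : 𝕂) - Finsupp.single (b * a ^ i) 1) : G →₀ 𝕂)
        = 0 := by
      have hc := congrArg MonoidAlgebra.coeff hzero
      rw [MonoidAlgebra.coeff_sum] at hc
      simpa only [MonoidAlgebra.coeff_sub, MonoidAlgebra.coeff_single, MonoidAlgebra.coeff_zero] using hc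
    have h0 := Finsupp.ext_iff.mp hz (a * b)
    simp only [Finsupp.coe_zero, Pi.zero_apply, Finsupp.finset_sum_apply, Finsupp.sub_apply] at h0
    rw [Finset.sum_sub_distrib] at h0
    have h1 : ∑ i ∈ Finset.range n,
        (Finsupp.single (a * (b * a ^ i)) (1 : 𝕂)) (a * b) = 1 := by
      have hc : ∀ i ∈ Finset.range n, (Finsupp.single (a * (b * a ^ i)) (1 : 𝕂)) (a * b)
          = if i = 0 then (1 : 𝕂) else 0 := by
        intro i hi
        rw [Finsupp.single_apply]
        congr 1
        simp only [eq_iff_iff]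
        constructor
        · intro h
          have h2 : b * a ^ i = b := mul_left_cancel h
          have h' : a ^ i = 1 := mul_left_cancel (by rw [h2, mul_one])
          have : n ∣ i := ha ▸ orderOf_dvd_of_pow_eq_one h'
          exact Nat.eq_zero_of_dvd_of_lt this (Finset.mem_range.mp hi)
        · rintro rfl; simp
      rw [Finset.sum_congr rfl hc, Finset.sum_ite_eq' (Finset.range n) 0 (fun _ => (1 : 𝕂))]
      have hn0 : 0 < n := by omega
      simp [Finset.mem_range.mpr hn0]
    rw [sub_eq_zero, h1] at h0
    obtain ⟨i, _, hi⟩ := Finset.exists_ne_zero_of_sum_ne_zero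
      (h0.symm ▸ (one_ne_zero : (1 : 𝕂) ≠ 0))
    have hbe : b * a ^ i = a * b := by
      by_contra hne
      rw [Finsupp.single_apply] at hi
      exact hi (if_neg hne)
    -- now show b normalizes ⟨a⟩
    have hi0 : i ≠ 0 := by
      rintro rfl
      rw [pow_zero, mul_one] at hbe
      have h1' : a * b = 1 * b := by rw [← hbe, one_mul]
      have : a = 1 := mul_right_cancel h1'
      rw [this, orderOf_one] at ha; omega
    have hconj : b * a ^ i * b⁻¹ = a := by rw [hbe]; group
    have hinv : b⁻¹ * a * b = a ^ i := by
      rw [mul_assoc, ← hbe, ← mul_assoc, inv_mul_cancel, one_mul]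
    have hoi : orderOf (a ^ i) = n := by
      have h := orderOf_injective (MulAut.conj b).toMonoidHom (MulAut.conj b).injective (a ^ i)
      rw [show (MulAut.conj b).toMonoidHom (a ^ i) = a from by
        simp [MulAut.conj_apply, hconj]] at h
      rw [← h, ha]
    have hcop : Nat.Coprime i n := by
      have h := orderOf_pow' a hi0
      rw [hoi, ha] at h
      have hd : (n.gcd i) ∣ n := Nat.gcd_dvd_left n i
      have hg : n.gcd i = 1 := by
        rcases (Nat.div_eq_self.mp h.symm) with h0 | h1
        · omega
        · exact h1
      exact Nat.Coprime.symm hg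
    obtain ⟨m, hm⟩ := exists_pow_eq_self_of_coprime (ha ▸ hcop)
    have hconj2 : b * a * b⁻¹ = a ^ m := by
      calc b * a * b⁻¹ = b * (a ^ i) ^ m * b⁻¹ := by rw [hm]
      _ = (b * a ^ i * b⁻¹) ^ m := by rw [conj_pow]
      _ = a ^ m := by rw [hconj]
    rw [Subgroup.mem_normalizer_iff]
    intro h
    constructor
    · rintro ⟨k, rfl⟩
      refine ⟨(m : ℤ) * k, ?_⟩
      calc a ^ ((m : ℤ) * k) = (a ^ (m : ℤ)) ^ k := by rw [← zpow_mul]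
      _ = (b * a * b⁻¹) ^ k := by rw [zpow_natCast, ← hconj2]
      _ = b * a ^ k * b⁻¹ := conj_zpow
    · rintro ⟨k, hk⟩
      have hh : h = b⁻¹ * a ^ k * b := by
        simp only at hk
        rw [hk]; group
      refine ⟨(i : ℤ) * k, ?_⟩
      rw [hh]
      calc a ^ ((i : ℤ) * k) = (a ^ (i : ℤ)) ^ k := by rw [← zpow_mul]
      _ = (b⁻¹ * a * b) ^ k := by rw [zpow_natCast, ← hinv]
      _ = b⁻¹ * a ^ k * b := by
          rw [show b⁻¹ * a * b = b⁻¹ * a * b⁻¹⁻¹ by group, conj_zpow]; group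
  refine ⟨he1, he2, hzpow, hXne, ?_, ?_⟩
  · intro h
    exact hXne (add_eq_left.mp h)
  · intro hchar w hw hfin
    obtain ⟨k, hk, hk1⟩ := isOfFinOrder_iff_pow_eq_one.mp hfin
    have h1 : ((w ^ (k : ℤ) : (MonoidAlgebra 𝕂 G)ˣ) : MonoidAlgebra 𝕂 G) = 1 + (k : ℤ) • X :=
      hzpow w hw (k : ℤ)
    rw [zpow_natCast, hk1, Units.val_one] at h1
    have h2 : (k : ℤ) • X = 0 := add_eq_left.mp h1.symm
    rw [← Int.cast_smul_eq_zsmul 𝕂] at h2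
    have : Module.IsTorsionFree 𝕂 (MonoidAlgebra 𝕂 G) :=
      inferInstance
    rcases smul_eq_zero.mp h2 with h3 | h3
    · have : ((k : ℤ) : 𝕂) ≠ 0 := by
        simp only [Int.cast_natCast, ne_eq, Nat.cast_eq_zero]
        omega
      exact this h3
    · exact hXne h3
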